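/- Let p be a prime and let Q(x) and R(x) be monic polynomials in ℚ_p[x]. Let β_1, …, β_m be the roots of Q(x) and α_1, …, α_n the roots of R(x), listed with multiplicity in a fixed algebraic closure of ℚ_p. Suppose that for every polynomial P(x) ∈ ℤ[x] one has v_p(∏_{i=1}^m P(β_i)) ≤ v_p(∏_{i=1}^n P(α_i)); here both products are symmetric in the roots and hence lie in ℚ_p (since Q and R are monic they equal the resultants Res(Q,P) and Res(R,P) respectively), and v_p denotes the p-adic valuation on ℚ_p. Then the multiset {β_1, …, β_m} is a submultiset of {α_1, …, α_n}; equivalently, Q(x) divides R(x) in ℚ_p[x]. -/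

import Mathlib

open Polynomial UniqueFactorizationMonoid

noncomputable def Nf {K : Type*} [Field K] (f P : K[X]) : K :=
  Algebra.norm K (Polynomial.aeval (AdjoinRoot.root f) P)

theorem lemA {K : Type*} [Field K] [CharZero K] {f : K[X]} (hm : f.Monic) (hirr : Irreducible f)
    (P : K[X]) :
    algebraMap K (AlgebraicClosure K) (Nf f P) =
      (((f.map (algebraMap K (AlgebraicClosure K))).roots).map
        (fun β => eval β (P.map (algebraMap K (AlgebraicClosure K))))).prod := by
  classical
  have hf0 : f ≠ 0 := hm.ne_zero
  haveI : Fact (Irreducible f) := ⟨hirr⟩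
  haveI : FiniteDimensional K (AdjoinRoot f) := (AdjoinRoot.powerBasis hf0).finite
  set L := AlgebraicClosure K
  set φ := algebraMap K L with hφ
  have key : (f.map φ).roots =
      Finset.univ.val.map (fun σ : AdjoinRoot f →ₐ[K] L => σ (AdjoinRoot.root f)) := by
    have hinj : Function.Injective (fun σ : AdjoinRoot f →ₐ[K] L => σ (AdjoinRoot.root f)) := by
      intro σ τ hst
      exact AdjoinRoot.algHom_ext hst
    have hnd : (Finset.univ.val.map
        (fun σ : AdjoinRoot f →ₐ[K] L => σ (AdjoinRoot.root f))).Nodup :=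
      Finset.univ.nodup.map hinj
    have hsub : (Finset.univ.val.map
        (fun σ : AdjoinRoot f →ₐ[K] L => σ (AdjoinRoot.root f))) ⊆ (f.map φ).roots := by
      intro x hx
      obtain ⟨σ, _, rfl⟩ := Multiset.mem_map.mp hx
      rw [mem_roots (by exact (hm.map φ).ne_zero)]
      show eval (σ (AdjoinRoot.root f)) (f.map φ) = 0
      rw [eval_map, hφ, ← aeval_def, Polynomial.aeval_algHom_apply, AdjoinRoot.aeval_eq,
        AdjoinRoot.mk_self, map_zero]
    have hle := (Multiset.le_iff_subset hnd).mpr hsub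
    have hcard : (f.map φ).roots.card ≤ (Finset.univ.val.map
        (fun σ : AdjoinRoot f →ₐ[K] L => σ (AdjoinRoot.root f))).card := by
      rw [Multiset.card_map]
      have h1 : (f.map φ).roots.card = f.natDegree :=
        IsAlgClosed.card_roots_map_eq_natDegree_of_injective f φ.injective
      have h2 : Fintype.card (AdjoinRoot f →ₐ[K] L) = Module.finrank K (AdjoinRoot f) :=
        AlgHom.card K (AdjoinRoot f) L
      have h3 : Module.finrank K (AdjoinRoot f) = f.natDegree := by
        rw [(AdjoinRoot.powerBasis hf0).finrank, AdjoinRoot.powerBasis_dim]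
      show (f.map φ).roots.card ≤ Finset.univ.card
      rw [h1, Finset.card_univ, h2, h3]
    exact (Multiset.eq_of_le_of_card_le hle hcard).symm
  rw [Nf, Algebra.norm_eq_prod_embeddings, key, Multiset.map_map]
  rw [Finset.prod_eq_multiset_prod]
  congr 1
  apply Multiset.map_congr rfl
  intro σ _
  show σ (Polynomial.aeval (AdjoinRoot.root f) P) = eval (σ (AdjoinRoot.root f)) (P.map φ)
  rw [← Polynomial.aeval_algHom_apply, aeval_def, eval_map]


open Polynomial UniqueFactorizationMonoid

noncomputable def GS {K : Type*} [Field K] [DecidableEq K] (S P : K[X]) : K :=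
  ((normalizedFactors S).map (fun g => Nf g P)).prod

theorem monic_of_normalizedFactor {K : Type*} [Field K] [DecidableEq K] {S g : K[X]}
    (hg : g ∈ normalizedFactors S) : g.Monic := by
  have h0 : g ≠ 0 := (irreducible_of_normalized_factor g hg).ne_zero
  rw [← normalize_normalized_factor g hg]
  exact Polynomial.monic_normalize h0

theorem lemB {K : Type*} [Field K] [DecidableEq K] [CharZero K] {S : K[X]} (hS : S.Monic)
    (P : K[X]) :
    algebraMap K (AlgebraicClosure K) (GS S P) =
      (((S.map (algebraMap K (AlgebraicClosure K))).roots).map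
        (fun β => eval β (P.map (algebraMap K (AlgebraicClosure K))))).prod := by
  classical
  set L := AlgebraicClosure K
  set φ := algebraMap K L with hφ
  have hS0 : S ≠ 0 := hS.ne_zero
  have hprodm : ((normalizedFactors S).prod).Monic := by
    rw [← Multiset.map_id (normalizedFactors S)]
    apply Polynomial.monic_multiset_prod_of_monic
    intro g hg
    exact monic_of_normalizedFactor hg
  have hprod : (normalizedFactors S).prod = S :=
    Polynomial.eq_of_monic_of_associated hprodm hS (prod_normalizedFactors hS0)
  have h0 : (0 : L[X]) ∉ Multiset.map (Polynomial.map φ) (normalizedFactors S) := by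
    intro hmem
    obtain ⟨g, hg, hg0⟩ := Multiset.mem_map.mp hmem
    exact ((monic_of_normalizedFactor hg).map φ).ne_zero hg0
  have hroots : (S.map φ).roots =
      (normalizedFactors S).bind (fun g => (g.map φ).roots) := by
    conv_lhs => rw [← hprod]
    rw [Polynomial.map_multiset_prod, Polynomial.roots_multiset_prod _ h0, Multiset.bind_map]
  rw [hroots, Multiset.map_bind, Multiset.prod_bind, GS, map_multiset_prod, Multiset.map_map]
  apply congrArg
  apply Multiset.map_congr rfl
  intro g hg
  exact lemA (monic_of_normalizedFactor hg) (irreducible_of_normalized_factor g hg) P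
open Polynomial UniqueFactorizationMonoid

noncomputable def polyOf {K : Type*} [Field K] (D : ℕ) (c : Fin (D + 1) → K) : K[X] :=
  ∑ j : Fin (D + 1), C (c j) * X ^ (j : ℕ)

theorem lemC {K : Type*} [NontriviallyNormedField K] [CompleteSpace K] {f : K[X]} (hf0 : f ≠ 0)
    (D : ℕ) : Continuous fun c : Fin (D + 1) → K => Nf f (polyOf D c) := by
  classical
  set pb := AdjoinRoot.powerBasis hf0 with hpb
  have key : ∀ c : Fin (D + 1) → K, Nf f (polyOf D c) =
      Matrix.det (∑ j : Fin (D + 1),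
        c j • Algebra.leftMulMatrix pb.basis (AdjoinRoot.root f ^ (j : ℕ))) := by
    intro c
    rw [Nf, Algebra.norm_eq_matrix_det pb.basis]
    congr 1
    have : (Polynomial.aeval (AdjoinRoot.root f)) (polyOf D c) =
        ∑ j : Fin (D + 1), c j • AdjoinRoot.root f ^ (j : ℕ) := by
      rw [polyOf, map_sum]
      refine Finset.sum_congr rfl fun j _ => ?_
      rw [map_mul, map_pow, aeval_C, aeval_X, Algebra.smul_def]
    rw [this, map_sum]
    refine Finset.sum_congr rfl fun j _ => ?_
    rw [map_smul]
  rw [funext key]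
  apply Continuous.matrix_det
  apply continuous_finset_sum
  intro j _
  exact (continuous_apply j).smul continuous_const
open Polynomial UniqueFactorizationMonoid Filter in
theorem stmt0 (p : ℕ) [Fact p.Prime] (Q R : Polynomial ℚ_[p])
    (hQ : Q.Monic) (hR : R.Monic)
    (h : ∀ P : Polynomial ℤ, ∀ a b : ℚ_[p],
      algebraMap ℚ_[p] (AlgebraicClosure ℚ_[p]) a =
        (((Q.map (algebraMap ℚ_[p] (AlgebraicClosure ℚ_[p]))).roots).map
          (fun β => Polynomial.aeval β P)).prod →
      algebraMap ℚ_[p] (AlgebraicClosure ℚ_[p]) b =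
        (((R.map (algebraMap ℚ_[p] (AlgebraicClosure ℚ_[p]))).roots).map
          (fun α => Polynomial.aeval α P)).prod →
      ‖b‖ ≤ ‖a‖) :
    Q ∣ R ∧
      (Q.map (algebraMap ℚ_[p] (AlgebraicClosure ℚ_[p]))).roots ≤
        (R.map (algebraMap ℚ_[p] (AlgebraicClosure ℚ_[p]))).roots := by
  classical
  have hQ0 : Q ≠ 0 := hQ.ne_zero
  have hR0 : R ≠ 0 := hR.ne_zero
  set L := AlgebraicClosure ℚ_[p] with hLdef
  set φ := algebraMap ℚ_[p] L with hφ
  have hp1 : ‖(p : ℚ_[p])‖ < 1 := Padic.norm_p_lt_one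
  have hp0 : (0:ℝ) ≤ ‖(p : ℚ_[p])‖ := norm_nonneg _
  have main : Q ∣ R := by
    rw [UniqueFactorizationMonoid.dvd_iff_normalizedFactors_le_normalizedFactors hQ0 hR0,
      Multiset.le_iff_count]
    intro f
    by_contra hlt
    push_neg at hlt
    set k := Multiset.count f (normalizedFactors Q) with hk
    set l := Multiset.count f (normalizedFactors R) with hl
    have hfQ : f ∈ normalizedFactors Q :=
      Multiset.count_pos.mp (lt_of_le_of_lt (Nat.zero_le _) hlt)
    have hirr : Irreducible f := irreducible_of_normalized_factor f hfQ
    have hfm : f.Monic := monic_of_normalizedFactor hfQ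
    have hf0 : f ≠ 0 := hfm.ne_zero
    set d := f.natDegree with hd
    have hdpos : 0 < d := hirr.natDegree_pos
    set D := d with hD
    -- choose M clearing denominators
    have hone : ∀ x : ℚ_[p], ∃ m : ℕ, ‖(p : ℚ_[p])^m * x‖ ≤ 1 := by
      intro x
      obtain ⟨m, hm⟩ := pow_unbounded_of_one_lt ‖x‖
        (by exact_mod_cast (Fact.out : p.Prime).one_lt : (1:ℝ) < (p:ℝ))
      refine ⟨m, ?_⟩
      rw [norm_mul, norm_pow, Padic.norm_p, inv_pow, ← div_eq_inv_mul,
        div_le_one (pow_pos (by exact_mod_cast (Fact.out : p.Prime).pos) m)]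
      exact hm.le
    obtain ⟨M, hM⟩ : ∃ M : ℕ, ∀ j : Fin (D+1), ‖(p : ℚ_[p])^M * f.coeff j‖ ≤ 1 := by
      choose m hm using fun j : Fin (D+1) => hone (f.coeff j)
      refine ⟨Finset.univ.sup m, fun j => ?_⟩
      have hle : m j ≤ Finset.univ.sup m := Finset.le_sup (Finset.mem_univ j)
      calc ‖(p : ℚ_[p])^(Finset.univ.sup m) * f.coeff j‖
          = ‖(p : ℚ_[p])^(Finset.univ.sup m - m j)‖ * ‖(p : ℚ_[p])^(m j) * f.coeff j‖ := by
            rw [← norm_mul, ← mul_assoc, ← pow_add, Nat.sub_add_cancel hle]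
        _ ≤ 1 * 1 := by
            apply mul_le_mul _ (hm j) (norm_nonneg _) zero_le_one
            rw [norm_pow]
            exact pow_le_one₀ hp0 hp1.le
        _ = 1 := one_mul 1
    set cinf : Fin (D+1) → ℚ_[p] := fun j => (p : ℚ_[p])^M * f.coeff j with hcinf
    set cS : ℕ → Fin (D+1) → ℚ_[p] :=
      fun S j => cinf j + (if j = 0 then (p : ℚ_[p])^S else 0) with hcS
    -- polynomial identities
    have hfsum : ∑ j : Fin (D+1), C (f.coeff j) * X ^ (j:ℕ) = f := by
      conv_rhs => rw [f.as_sum_range' (D+1) (by omega)]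
      rw [← Fin.sum_univ_eq_sum_range]
      exact Finset.sum_congr rfl fun j _ => C_mul_X_pow_eq_monomial
    have hpolyinf : polyOf D cinf = C ((p : ℚ_[p])^M) * f := by
      rw [polyOf, ← hfsum, Finset.mul_sum]
      refine Finset.sum_congr rfl fun j _ => ?_
      rw [hcinf, ← mul_assoc, ← C_mul]
    have hpoly : ∀ S : ℕ, polyOf D (cS S) = C ((p : ℚ_[p])^M) * f + C ((p : ℚ_[p])^S) := by
      intro S
      have h2 : ∑ j : Fin (D+1), (if j = 0 then C ((p : ℚ_[p])^S) else (0 : Polynomial ℚ_[p])) =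
          C ((p : ℚ_[p])^S) := by simp
      calc polyOf D (cS S) = ∑ j : Fin (D+1), (C (cinf j) * X ^ (j:ℕ) +
            (if j = 0 then C ((p : ℚ_[p])^S) else 0)) := by
            rw [polyOf]
            refine Finset.sum_congr rfl fun j _ => ?_
            by_cases hj : j = 0 <;> simp [hcS, hj, C_add, add_mul]
        _ = C ((p : ℚ_[p])^M) * f + C ((p : ℚ_[p])^S) := by
            rw [Finset.sum_add_distrib, h2, ← hpolyinf, polyOf]
    -- exact value at f
    have hcard : (f.map φ).roots.card = d :=
      IsAlgClosed.card_roots_map_eq_natDegree_of_injective f φ.injective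
    have hval1 : ∀ S : ℕ, Nf f (polyOf D (cS S)) = ((p : ℚ_[p])^S)^d := by
      intro S
      apply (algebraMap ℚ_[p] L).injective
      rw [lemA hfm hirr, hpoly S]
      have hconst : ∀ β ∈ (f.map φ).roots,
          eval β ((C ((p : ℚ_[p])^M) * f + C ((p : ℚ_[p])^S)).map φ) = φ ((p : ℚ_[p])^S) := by
        intro β hβ
        have hroot : eval β (f.map φ) = 0 := Polynomial.isRoot_of_mem_roots hβ
        simp [Polynomial.map_add, Polynomial.map_mul, Polynomial.map_C, hroot]
      rw [Multiset.map_congr rfl hconst, Multiset.map_const', Multiset.prod_replicate, hcard,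
        ← map_pow]
    -- splits of factor multisets
    set Q₂ := Multiset.filter (fun x => ¬ x = f) (normalizedFactors Q) with hQ₂
    set R₂ := Multiset.filter (fun x => ¬ x = f) (normalizedFactors R) with hR₂
    have hQsplit : normalizedFactors Q = Multiset.replicate k f + Q₂ := by
      conv_lhs => rw [← Multiset.filter_add_not (fun x => x = f) (normalizedFactors Q)]
      rw [Multiset.filter_eq']
    have hRsplit : normalizedFactors R = Multiset.replicate l f + R₂ := by
      conv_lhs => rw [← Multiset.filter_add_not (fun x => x = f) (normalizedFactors R)]
      rw [Multiset.filter_eq']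
    have hGSQ : ∀ Pp : Polynomial ℚ_[p],
        GS Q Pp = (Nf f Pp)^k * ((Q₂.map (fun g => Nf g Pp)).prod) := by
      intro Pp
      rw [GS]
      conv_lhs => rw [hQsplit]
      rw [Multiset.map_add, Multiset.prod_add, Multiset.map_replicate, Multiset.prod_replicate]
    have hGSR : ∀ Pp : Polynomial ℚ_[p],
        GS R Pp = (Nf f Pp)^l * ((R₂.map (fun g => Nf g Pp)).prod) := by
      intro Pp
      rw [GS]
      conv_lhs => rw [hRsplit]
      rw [Multiset.map_add, Multiset.prod_add, Multiset.map_replicate, Multiset.prod_replicate]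
    -- nonvanishing at cinf for other factors
    have hnz : ∀ g ∈ Q₂ + R₂, Nf g (polyOf D cinf) ≠ 0 := by
      intro g hg
      have hgQR : (g ∈ normalizedFactors Q ∨ g ∈ normalizedFactors R) ∧ ¬ g = f := by
        rcases Multiset.mem_add.mp hg with hg' | hg'
        · exact ⟨Or.inl (Multiset.mem_filter.mp hg').1, (Multiset.mem_filter.mp hg').2⟩
        · exact ⟨Or.inr (Multiset.mem_filter.mp hg').1, (Multiset.mem_filter.mp hg').2⟩
      have hgirr : Irreducible g := by
        rcases hgQR.1 with hg' | hg'
        · exact irreducible_of_normalized_factor g hg'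
        · exact irreducible_of_normalized_factor g hg'
      have hgm : g.Monic := by
        rcases hgQR.1 with hg' | hg'
        · exact monic_of_normalizedFactor hg'
        · exact monic_of_normalizedFactor hg'
      haveI : Fact (Irreducible g) := ⟨hgirr⟩
      haveI : FiniteDimensional ℚ_[p] (AdjoinRoot g) := (AdjoinRoot.powerBasis hgm.ne_zero).finite
      rw [Nf, Algebra.norm_ne_zero_iff]
      rw [hpolyinf, map_mul, aeval_C]
      apply mul_ne_zero
      · have hpM : ((p : ℚ_[p])^M) ≠ 0 :=
          pow_ne_zero _ (by exact_mod_cast (Fact.out : p.Prime).ne_zero)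
        intro h0'
        exact hpM ((algebraMap ℚ_[p] (AdjoinRoot g)).injective (by rw [h0', map_zero]))
      · intro h0
        have hdvd : minpoly ℚ_[p] (AdjoinRoot.root g) ∣ f := minpoly.dvd _ _ h0
        rw [AdjoinRoot.minpoly_root hgm.ne_zero, hgm.leadingCoeff, inv_one, Polynomial.C_1,
          mul_one] at hdvd
        exact hgQR.2 (Polynomial.eq_of_monic_of_associated hgm hfm
          (hgirr.associated_of_dvd hirr hdvd))
    -- continuity
    have hcQ2 : Continuous fun c : Fin (D+1) → ℚ_[p] =>
        ((Q₂.map (fun g => Nf g (polyOf D c))).prod) := by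
      apply continuous_multiset_prod
      intro g hg
      have hgne : g ≠ 0 := by
        rcases Multiset.mem_filter.mp hg with ⟨hg', _⟩
        exact (irreducible_of_normalized_factor g hg').ne_zero
      exact lemC hgne D
    have hcR2 : Continuous fun c : Fin (D+1) → ℚ_[p] =>
        ((R₂.map (fun g => Nf g (polyOf D c))).prod) := by
      apply continuous_multiset_prod
      intro g hg
      have hgne : g ≠ 0 := by
        rcases Multiset.mem_filter.mp hg with ⟨hg', _⟩
        exact (irreducible_of_normalized_factor g hg').ne_zero
      exact lemC hgne D
    -- tendsto
    have htend : Filter.Tendsto cS Filter.atTop (nhds cinf) := by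
      rw [tendsto_pi_nhds]
      intro j
      by_cases hj : j = 0
      · subst hj
        have h1 : Filter.Tendsto (fun S : ℕ => ((p : ℚ_[p]))^S) Filter.atTop (nhds 0) :=
          tendsto_pow_atTop_nhds_zero_of_norm_lt_one hp1
        have := h1.const_add (cinf 0)
        simpa [hcS] using this
      · simpa [hcS, hj] using tendsto_const_nhds
    -- norm stabilization
    have hstab : ∀ F : (Fin (D+1) → ℚ_[p]) → ℚ_[p], Continuous F → F cinf ≠ 0 →
        ∀ᶠ S in Filter.atTop, ‖F (cS S)‖ = ‖F cinf‖ := by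
      intro F hF h0
      have h1 : Filter.Tendsto (fun S => F (cS S)) Filter.atTop (nhds (F cinf)) :=
        (hF.tendsto _).comp htend
      have h2 : ∀ᶠ S in Filter.atTop, dist (F (cS S)) (F cinf) < ‖F cinf‖ :=
        h1 (Metric.ball_mem_nhds _ (norm_pos_iff.mpr h0))
      filter_upwards [h2] with S hS
      have h3 : ‖F (cS S) - F cinf‖ < ‖F cinf‖ := by rwa [← dist_eq_norm]
      have h4 : ‖F cinf‖ ≠ ‖F (cS S) - F cinf‖ := (ne_of_lt h3).symm
      calc ‖F (cS S)‖ = ‖F cinf + (F (cS S) - F cinf)‖ := by ring_nf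
        _ = max ‖F cinf‖ ‖F (cS S) - F cinf‖ := Padic.add_eq_max_of_ne h4
        _ = ‖F cinf‖ := max_eq_left h3.le
    have hA2ne : ((Q₂.map (fun g => Nf g (polyOf D cinf))).prod) ≠ 0 := by
      apply Multiset.prod_ne_zero
      rw [Multiset.mem_map]
      rintro ⟨g, hg, hg0⟩
      exact hnz g (Multiset.mem_add.mpr (Or.inl hg)) hg0
    have hB2ne : ((R₂.map (fun g => Nf g (polyOf D cinf))).prod) ≠ 0 := by
      apply Multiset.prod_ne_zero
      rw [Multiset.mem_map]
      rintro ⟨g, hg, hg0⟩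
      exact hnz g (Multiset.mem_add.mpr (Or.inr hg)) hg0
    -- extension of hypothesis
    have hcQ : Continuous fun c : Fin (D+1) → ℚ_[p] => GS Q (polyOf D c) := by
      simp only [GS]
      apply continuous_multiset_prod
      intro g hg
      exact lemC (irreducible_of_normalized_factor g hg).ne_zero D
    have hcR : Continuous fun c : Fin (D+1) → ℚ_[p] => GS R (polyOf D c) := by
      simp only [GS]
      apply continuous_multiset_prod
      intro g hg
      exact lemC (irreducible_of_normalized_factor g hg).ne_zero D
    have hext : ∀ c : Fin (D+1) → ℚ_[p], (∀ j, ‖c j‖ ≤ 1) →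
        ‖GS R (polyOf D c)‖ ≤ ‖GS Q (polyOf D c)‖ := by
      have hclosed : IsClosed {c : Fin (D+1) → ℚ_[p] |
          ‖GS R (polyOf D c)‖ ≤ ‖GS Q (polyOf D c)‖} :=
        isClosed_le hcR.norm hcQ.norm
      have hint : ∀ u : Fin (D+1) → ℤ, (fun j => ((u j : ℚ_[p]))) ∈ {c : Fin (D+1) → ℚ_[p] |
          ‖GS R (polyOf D c)‖ ≤ ‖GS Q (polyOf D c)‖} := by
        intro u
        set c : Fin (D+1) → ℚ_[p] := fun j => ((u j : ℚ_[p])) with hc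
        set P : Polynomial ℤ := ∑ j : Fin (D+1), Polynomial.C (u j) * Polynomial.X ^ (j:ℕ)
          with hP
        have hkey : ∀ β : L, Polynomial.aeval β P = eval β ((polyOf D c).map φ) := by
          intro β
          simp [hP, polyOf, hc, Polynomial.map_sum, map_sum, Polynomial.eval_finset_sum]
        refine h P (GS Q (polyOf D c)) (GS R (polyOf D c)) ?_ ?_
        · rw [lemB hQ (polyOf D c)]
          exact (congrArg Multiset.prod (Multiset.map_congr rfl fun β _ => hkey β)).symm
        · rw [lemB hR (polyOf D c)]
          exact (congrArg Multiset.prod (Multiset.map_congr rfl fun β _ => hkey β)).symm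
      intro c hc
      have hmem : c ∈ closure (Set.range fun u : Fin (D+1) → ℤ =>
          (fun j => ((u j : ℚ_[p])) : Fin (D+1) → ℚ_[p])) := by
        rw [Metric.mem_closure_iff]
        intro ε hε
        have hcoord : ∀ j : Fin (D+1), ∃ m : ℤ, dist (c j) ((m : ℚ_[p])) < ε := by
          intro j
          set x : ℤ_[p] := ⟨c j, hc j⟩ with hx
          obtain ⟨m, hm⟩ := Metric.denseRange_iff.mp PadicInt.denseRange_intCast x ε hε
          refine ⟨m, ?_⟩
          have hdd : dist x ((m : ℤ_[p])) = dist (c j) ((m : ℚ_[p])) := by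
            rw [dist_eq_norm, dist_eq_norm, PadicInt.norm_def]
            congr 1
          rwa [hdd] at hm
        choose u hu using hcoord
        refine ⟨_, ⟨u, rfl⟩, ?_⟩
        rw [dist_pi_lt_iff hε]
        exact hu
      have := closure_minimal (Set.range_subset_iff.mpr hint) hclosed
      exact this hmem
    -- final contradiction
    set t := ‖(p : ℚ_[p])‖ with ht
    have ht0 : 0 < t := by
      rw [ht, norm_pos_iff]
      exact_mod_cast (Fact.out : p.Prime).ne_zero
    have htd : t^d < 1 := pow_lt_one₀ hp0 hp1 hdpos.ne'
    have hAQ : 0 < ‖(Q₂.map (fun g => Nf g (polyOf D cinf))).prod‖ := norm_pos_iff.mpr hA2ne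
    have hBR : 0 < ‖(R₂.map (fun g => Nf g (polyOf D cinf))).prod‖ := norm_pos_iff.mpr hB2ne
    have hsmall : ∀ᶠ S in Filter.atTop, (t^d)^S * ‖(Q₂.map (fun g => Nf g (polyOf D cinf))).prod‖
        < ‖(R₂.map (fun g => Nf g (polyOf D cinf))).prod‖ := by
      have h1 : Filter.Tendsto (fun S : ℕ => (t^d)^S *
          ‖(Q₂.map (fun g => Nf g (polyOf D cinf))).prod‖) Filter.atTop (nhds 0) := by
        simpa using (tendsto_pow_atTop_nhds_zero_of_norm_lt_one
          (x := t^d) (by rwa [Real.norm_of_nonneg (pow_nonneg ht0.le d)])).mul_const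
          ‖(Q₂.map (fun g => Nf g (polyOf D cinf))).prod‖
      exact h1.eventually_lt_const hBR
    obtain ⟨S, hS1, hS2, hS3⟩ :=
      ((hstab _ hcQ2 hA2ne).and ((hstab _ hcR2 hB2ne).and hsmall)).exists
    have hcoeff : ∀ j, ‖cS S j‖ ≤ 1 := by
      intro j
      refine le_trans (Padic.nonarchimedean _ _) (max_le (hM j) ?_)
      by_cases hj : j = 0
      · simp only [hj, if_true]
        rw [norm_pow]
        exact pow_le_one₀ hp0 hp1.le
      · simp [hj]
    have hineq := hext (cS S) hcoeff
    rw [hGSQ, hGSR, norm_mul, norm_mul, norm_pow, norm_pow] at hineq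
    have hnorm1 : ‖Nf f (polyOf D (cS S))‖ = (t^d)^S := by
      rw [hval1 S, norm_pow, norm_pow, ht, ← pow_mul, ← pow_mul, Nat.mul_comm]
    rw [hnorm1, hS1, hS2] at hineq
    set u := (t^d)^S with hu
    set aQ := ‖(Q₂.map (fun g => Nf g (polyOf D cinf))).prod‖ with haQ
    set bR := ‖(R₂.map (fun g => Nf g (polyOf D cinf))).prod‖ with hbR
    have hu0 : 0 < u := pow_pos (pow_pos ht0 d) S
    have hu1 : u ≤ 1 := pow_le_one₀ (pow_nonneg ht0.le d) htd.le
    have hfin : bR ≤ u * aQ := by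
      have hpow : u^k ≤ u^(l+1) := pow_le_pow_of_le_one hu0.le hu1 (by omega)
      have h5 : u^l * bR ≤ u^l * (u * aQ) := by
        calc u^l * bR ≤ u^k * aQ := hineq
          _ ≤ u^(l+1) * aQ := mul_le_mul_of_nonneg_right hpow (norm_nonneg _)
          _ = u^l * (u * aQ) := by ring
      exact le_of_mul_le_mul_left h5 (pow_pos hu0 l)
    exact absurd hfin (not_le.mpr hS3)
  refine ⟨main, ?_⟩
  exact Polynomial.roots.le_of_dvd ((hR.map φ).ne_zero) (Polynomial.map_dvd φ main)
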